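/- Let s = (s_j)_{j=0}^{2ν−2} be a real sequence with s_0 = ⋯ = s_{ν−2} = 0 and s_{ν−1} ≠ 0. Then: (1) det S_i = 0 for 1 ≤ i ≤ ν−1, while det S_ν ≠ 0 and det S_{ν−1}^+ ≠ 0 (so ν is the first normal index of s); (2) (−1)^{ν+1}·det S_{ν−1}^+ / det S_ν = 1/s_{ν−1}; (3) ν_−(S_ν) = ⌊(ν+1)/2⌋ if ν is odd and s_{ν−1} < 0, and ν_−(S_ν) = ⌊ν/2⌋ otherwise; (4) ν_−(S_{ν−1}^+) = ⌊ν/2⌋ if ν is even and s_{ν−1} < 0, and ν_−(S_{ν−1}^+) = ⌊(ν−1)/2⌋ otherwise. -/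

import Mathlib

open Polynomial Matrix Finset

noncomputable section

/-- Hankel matrix `S_n = (s_{i+j})_{i,j=0}^{n-1}`. -/
def hankelM (s : ℕ → ℝ) (n : ℕ) : Matrix (Fin n) (Fin n) ℝ :=
  Matrix.of fun i j => s ((i : ℕ) + (j : ℕ))

/-- Shifted Hankel matrix `S_n^+ = (s_{i+j+1})_{i,j=0}^{n-1}`. -/
def hankelMp (s : ℕ → ℝ) (n : ℕ) : Matrix (Fin n) (Fin n) ℝ :=
  Matrix.of fun i j => s ((i : ℕ) + (j : ℕ) + 1)

/-- Number of negative eigenvalues (with multiplicity), as roots of the char. polynomial. -/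
def nuNeg {n : ℕ} (A : Matrix (Fin n) (Fin n) ℝ) : ℕ :=
  Multiset.card (A.charpoly.roots.filter (fun x => x < 0))

/-! ### Auxiliary lemmas -/

lemma det_antitri : ∀ (n : ℕ) (t : ℕ → ℝ), (∀ m, m + 2 ≤ n → t m = 0) →
    Matrix.det (Matrix.of fun i j : Fin n => t ((i:ℕ) + j)) =
      (-1 : ℝ)^(n*(n-1)/2) * t (n-1) ^ n := by
  intro n
  induction n with
  | zero => intro t _; simp [Matrix.det_fin_zero]
  | succ n ih =>
    intro t ht
    rw [Matrix.det_succ_row_zero]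
    rw [Finset.sum_eq_single_of_mem (Fin.last n) (Finset.mem_univ _)]
    · have hmin : ((Matrix.of fun i j : Fin (n+1) => t ((i:ℕ) + j)).submatrix Fin.succ
          (Fin.last n).succAbove) = Matrix.of fun i j : Fin n => (fun m => t (m+1)) ((i:ℕ) + j) := by
        ext i j
        simp [Fin.succAbove_last, Fin.val_succ]
        ring_nf
      rw [hmin, ih (fun m => t (m+1)) (fun m hm => ht (m+1) (by omega))]
      rw [Nat.triangle_succ n]
      have he : (Matrix.of fun i j : Fin (n+1) => t ((i:ℕ)+j)) 0 (Fin.last n) = t n := by simp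
      rw [he]
      cases n with
      | zero => simp
      | succ m =>
        simp only [Nat.add_sub_cancel] at *
        rw [Fin.val_last, pow_add, pow_succ]
        ring
    · intro j _ hj
      have hz : (Matrix.of fun i j : Fin (n+1) => t ((i:ℕ) + j)) 0 j = 0 := by
        have hlt : (j:ℕ) < n := by
          rcases Nat.lt_succ_iff_lt_or_eq.mp j.2 with h | h
          · exact h
          · exact absurd (Fin.ext h : j = Fin.last n) hj
        simp only [Matrix.of_apply, Fin.val_zero, Nat.zero_add]
        exact ht _ (by omega)
      rw [hz, mul_zero, zero_mul]

lemma charpoly_conj_unitary {n : ℕ} (U : Matrix.unitaryGroup (Fin n) ℝ)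
    (D : Matrix (Fin n) (Fin n) ℝ) :
    ((U : Matrix (Fin n) (Fin n) ℝ) * D * star (U : Matrix (Fin n) (Fin n) ℝ)).charpoly
      = D.charpoly := by
  set P : Matrix (Fin n) (Fin n) ℝ := (U : Matrix (Fin n) (Fin n) ℝ) with hP
  have hPQ : P * star P = 1 := Matrix.mem_unitaryGroup_iff.mp U.2
  have hQP : star P * P = 1 := Matrix.mem_unitaryGroup_iff'.mp U.2
  set f := (RingHom.mapMatrix (C : ℝ →+* ℝ[X]) :
    Matrix (Fin n) (Fin n) ℝ →+* Matrix (Fin n) (Fin n) ℝ[X]) with hf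
  have hc : charmatrix (P * D * star P) = f P * charmatrix D * f (star P) := by
    simp only [charmatrix, mul_sub, sub_mul]
    congr 1
    · calc Matrix.scalar (Fin n) X
          = Matrix.scalar (Fin n) X * (f P * f (star P)) := by
            rw [← _root_.map_mul f, hPQ, _root_.map_one f, mul_one]
        _ = f P * Matrix.scalar (Fin n) X * f (star P) := by
            rw [← mul_assoc, (Matrix.scalar_commute X (fun r => Commute.all _ _) (f P)).eq]
    · rw [← _root_.map_mul f, ← _root_.map_mul f]
  unfold Matrix.charpoly
  rw [hc, Matrix.det_mul, Matrix.det_mul, mul_comm, ← mul_assoc, ← Matrix.det_mul,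
    ← _root_.map_mul f, hQP, _root_.map_one f, Matrix.det_one, one_mul]

lemma charpoly_roots_herm {n : ℕ} {A : Matrix (Fin n) (Fin n) ℝ} (hA : A.IsHermitian) :
    A.charpoly.roots = Multiset.map hA.eigenvalues Finset.univ.val := by
  conv_lhs => rw [hA.spectral_theorem, Unitary.conjStarAlgAut_apply]
  rw [charpoly_conj_unitary hA.eigenvectorUnitary]
  rw [RCLike.ofReal_real_eq_id, Function.id_comp]
  rw [Matrix.charpoly_of_upperTriangular _ (Matrix.blockTriangular_diagonal _)]
  have h : ∀ i : Fin n, Matrix.diagonal hA.eigenvalues i i = hA.eigenvalues i := fun i =>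
    Matrix.diagonal_apply_eq _ i
  simp_rw [h]
  rw [Finset.prod_eq_multiset_prod]
  have := roots_multiset_prod_X_sub_C (Multiset.map hA.eigenvalues Finset.univ.val)
  rw [Multiset.map_map] at this
  exact this

lemma card_sign_le {n k : ℕ} {A : Matrix (Fin n) (Fin n) ℝ} (hA : A.IsHermitian)
    (p : Fin n → Prop) [DecidablePred p]
    (hsgn : (∀ i, ¬ p i → 0 < hA.eigenvalues i) ∨ (∀ i, ¬ p i → hA.eigenvalues i < 0))
    (hkn : k ≤ n)
    (hiso : ∀ v : Fin n → ℝ, (∀ i : Fin n, ¬ ((i:ℕ) < k) → v i = 0) → v ⬝ᵥ (A *ᵥ v) = 0) :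
    k ≤ (Finset.univ.filter p).card := by
  classical
  set U : Matrix (Fin n) (Fin n) ℝ := (hA.eigenvectorUnitary : Matrix (Fin n) (Fin n) ℝ) with hU
  have hPQ : U * star U = 1 := Matrix.mem_unitaryGroup_iff.mp hA.eigenvectorUnitary.2
  set lam := hA.eigenvalues with hlam
  set embL : (Fin k → ℝ) →ₗ[ℝ] (Fin n → ℝ) :=
    { toFun := fun x i => if h : (i:ℕ) < k then x ⟨i, h⟩ else 0
      map_add' := by
        intro x y; funext i; by_cases h : (i:ℕ) < k <;> simp [h]
      map_smul' := by
        intro c x; funext i; by_cases h : (i:ℕ) < k <;> simp [h] } with hembL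
  set projL : (Fin n → ℝ) →ₗ[ℝ] ({i // i ∈ Finset.univ.filter p} → ℝ) :=
    LinearMap.funLeft ℝ ℝ (fun i => (i : Fin n)) with hprojL
  set Φ := projL ∘ₗ (Matrix.mulVecLin (star U)) ∘ₗ embL with hΦ
  have hinj : Function.Injective Φ := by
    rw [injective_iff_map_eq_zero]
    intro x hx
    set v : Fin n → ℝ := embL x with hv
    set y : Fin n → ℝ := star U *ᵥ v with hy
    have hyp : ∀ i : Fin n, p i → y i = 0 := by
      intro i hpi
      have h0 : Φ x ⟨i, by simp [hpi]⟩ = 0 := by rw [hx]; rfl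
      simpa [hΦ, hprojL, LinearMap.funLeft_apply, Matrix.mulVecLin_apply, ← hv, ← hy] using h0
    have hQ : v ⬝ᵥ (A *ᵥ v) = 0 := hiso v (fun i h => dif_neg h)
    have hsum : v ⬝ᵥ (A *ᵥ v) = ∑ i, lam i * (y i * y i) := by
      conv_lhs => rw [hA.spectral_theorem, Unitary.conjStarAlgAut_apply]
      rw [← Matrix.mulVec_mulVec, ← Matrix.mulVec_mulVec]
      rw [Matrix.dotProduct_mulVec]
      have hvm : v ᵥ* U = y := by
        rw [hy, Matrix.star_eq_conjTranspose, Matrix.conjTranspose_eq_transpose_of_trivial,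
          Matrix.mulVec_transpose]
      rw [hvm, RCLike.ofReal_real_eq_id, Function.id_comp]
      simp only [dotProduct, Matrix.mulVec_diagonal, ← hy, ← hlam]
      congr 1; funext i; ring
    rw [hQ] at hsum
    have h1 : ∑ i ∈ Finset.univ.filter p, lam i * (y i * y i) = 0 :=
      Finset.sum_eq_zero (fun i hi => by
        rw [hyp i (Finset.mem_filter.mp hi).2]; ring)
    have h2 : ∑ i ∈ Finset.univ.filter (fun i => ¬ p i), lam i * (y i * y i) = 0 := by
      have hsplit := Finset.sum_filter_add_sum_filter_not Finset.univ p
        (fun i => lam i * (y i * y i))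
      rw [← hsplit, h1, zero_add] at hsum
      exact hsum.symm
    have hy0 : ∀ i : Fin n, ¬ p i → y i = 0 := by
      rcases hsgn with hpos | hneg
      · intro i hpi
        have hall := (Finset.sum_eq_zero_iff_of_nonneg (fun j hj =>
          mul_nonneg (le_of_lt (hpos j (Finset.mem_filter.mp hj).2)) (mul_self_nonneg _))).mp h2
        have := hall i (Finset.mem_filter.mpr ⟨Finset.mem_univ _, hpi⟩)
        have hne : lam i ≠ 0 := ne_of_gt (hpos i hpi)
        have : y i * y i = 0 := by
          rcases mul_eq_zero.mp this with h | h
          · exact absurd h hne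
          · exact h
        exact mul_self_eq_zero.mp this
      · intro i hpi
        have hall := (Finset.sum_eq_zero_iff_of_nonpos (fun j hj =>
          mul_nonpos_of_nonpos_of_nonneg (le_of_lt (hneg j (Finset.mem_filter.mp hj).2))
            (mul_self_nonneg _))).mp h2
        have := hall i (Finset.mem_filter.mpr ⟨Finset.mem_univ _, hpi⟩)
        have hne : lam i ≠ 0 := ne_of_lt (hneg i hpi)
        have : y i * y i = 0 := by
          rcases mul_eq_zero.mp this with h | h
          · exact absurd h hne
          · exact h
        exact mul_self_eq_zero.mp this
    have hyz : y = 0 := by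
      funext i
      by_cases hpi : p i
      · exact hyp i hpi
      · exact hy0 i hpi
    have hvz : v = 0 := by
      have : v = U *ᵥ y := by rw [hy, Matrix.mulVec_mulVec, hPQ, Matrix.one_mulVec]
      rw [this, hyz, Matrix.mulVec_zero]
    funext j
    have := congrFun hvz ⟨(j:ℕ), lt_of_lt_of_le j.2 hkn⟩
    simpa [hv, hembL, j.2] using this
  have hfr := LinearMap.finrank_le_finrank_of_injective hinj
  rwa [Module.finrank_fintype_fun_eq_card, Module.finrank_fintype_fun_eq_card,
    Fintype.card_fin, Fintype.card_coe] at hfr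

lemma nuNeg_antitri (n : ℕ) (t : ℕ → ℝ) (ht : ∀ m, m + 2 ≤ n → t m = 0)
    (ha : t (n-1) ≠ 0) :
    nuNeg (Matrix.of fun i j : Fin n => t ((i:ℕ) + j)) =
      if Odd n ∧ t (n-1) < 0 then (n+1)/2 else n/2 := by
  classical
  set A : Matrix (Fin n) (Fin n) ℝ := Matrix.of fun i j : Fin n => t ((i:ℕ) + j) with hAdef
  have hA : A.IsHermitian := by
    refine Matrix.ext fun i j => ?_
    simp only [hAdef, Matrix.conjTranspose_apply, Matrix.of_apply, star_trivial]
    rw [Nat.add_comm]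
  set lam := hA.eigenvalues with hlam
  have hdet : A.det = (-1 : ℝ)^(n*(n-1)/2) * t (n-1) ^ n := det_antitri n t ht
  have hdet0 : A.det ≠ 0 := by
    rw [hdet]
    exact mul_ne_zero (pow_ne_zero _ (by norm_num)) (pow_ne_zero _ ha)
  have hprod : A.det = ∏ i, lam i := by
    have := hA.det_eq_prod_eigenvalues
    simpa [RCLike.ofReal_real_eq_id] using this
  have hlam0 : ∀ i, lam i ≠ 0 := by
    intro i hi
    rw [hprod] at hdet0
    exact hdet0 (Finset.prod_eq_zero (Finset.mem_univ i) hi)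
  set N := Finset.univ.filter (fun i => lam i < 0) with hN
  set P := Finset.univ.filter (fun i => 0 < lam i) with hP
  have hnu : nuNeg A = N.card := by
    unfold nuNeg
    rw [charpoly_roots_herm hA, Multiset.filter_map]
    rw [Multiset.card_map]
    rfl
  have hcardsum : N.card + P.card = n := by
    have h1 : Finset.univ.filter (fun i => ¬ lam i < 0) = P := by
      apply Finset.filter_congr
      intro i _
      constructor
      · intro h; exact lt_of_le_of_ne (not_lt.mp h) (Ne.symm (hlam0 i))
      · intro h; exact not_lt.mpr (le_of_lt h)
    have h2 := Finset.card_filter_add_card_filter_not (s := Finset.univ)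
      (p := fun i => lam i < 0)
    simp only [h1] at h2
    simpa using h2
  have hiso : ∀ v : Fin n → ℝ, (∀ i : Fin n, ¬ ((i:ℕ) < n/2) → v i = 0) →
      v ⬝ᵥ (A *ᵥ v) = 0 := by
    intro v hsupp
    unfold dotProduct Matrix.mulVec dotProduct
    apply Finset.sum_eq_zero
    intro i _
    by_cases hvi : v i = 0
    · rw [hvi, zero_mul]
    · have hik : (i:ℕ) < n/2 := by
        by_contra h
        exact hvi (hsupp i h)
      have : ∑ j, A i j * v j = 0 := by
        apply Finset.sum_eq_zero
        intro j _
        by_cases hvj : v j = 0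
        · rw [hvj, mul_zero]
        · have hjk : (j:ℕ) < n/2 := by
            by_contra h
            exact hvj (hsupp j h)
          have : A i j = 0 := ht _ (by omega)
          rw [this, zero_mul]
      rw [this, mul_zero]
  have hNge : n/2 ≤ N.card := by
    refine card_sign_le hA _ (Or.inl ?_) (Nat.div_le_self n 2) hiso
    intro i hi
    exact lt_of_le_of_ne (not_lt.mp hi) (Ne.symm (hlam0 i))
  have hPge : n/2 ≤ P.card := by
    refine card_sign_le hA _ (Or.inr ?_) (Nat.div_le_self n 2) hiso
    intro i hi
    exact lt_of_le_of_ne (not_lt.mp hi) (hlam0 i)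
  rcases Nat.even_or_odd n with hn | hn
  · obtain ⟨m, hm⟩ := id hn
    have hcard : N.card = n/2 := by omega
    rw [hnu, hcard, if_neg]
    rintro ⟨hodd, -⟩
    exact (Nat.not_odd_iff_even.mpr hn) hodd
  · obtain ⟨m, hm⟩ := hn
    have hn2 : n / 2 = m := by omega
    have hcard : N.card = m ∨ N.card = m + 1 := by omega
    have hNneg : ∏ i ∈ N, (-(lam i)) > 0 := by
      apply Finset.prod_pos
      intro i hi
      have := (Finset.mem_filter.mp hi).2
      linarith
    have hPpos : 0 < ∏ i ∈ Finset.univ.filter (fun i => ¬ lam i < 0), lam i := by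
      apply Finset.prod_pos
      intro i hi
      have := (Finset.mem_filter.mp hi).2
      exact lt_of_le_of_ne (not_lt.mp this) (Ne.symm (hlam0 i))
    set C : ℝ := (∏ i ∈ N, (-(lam i))) * ∏ i ∈ Finset.univ.filter (fun i => ¬ lam i < 0), lam i
      with hC
    have hCpos : 0 < C := mul_pos hNneg hPpos
    have hdetC : A.det = (-1 : ℝ)^N.card * C := by
      rw [hprod, ← Finset.prod_filter_mul_prod_filter_not Finset.univ (fun i => lam i < 0) lam]
      have : ∏ i ∈ N, lam i = (-1 : ℝ)^N.card * ∏ i ∈ N, (-(lam i)) := by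
        rw [← Finset.prod_const, ← Finset.prod_mul_distrib]
        apply Finset.prod_congr rfl
        intro i _
        ring
      rw [this, hC]
      ring
    have hiff : Odd N.card ↔ A.det < 0 := by
      rcases Nat.even_or_odd N.card with hc | hc
      · rw [hdetC, hc.neg_one_pow, one_mul]
        constructor
        · intro h; exact absurd h (Nat.not_odd_iff_even.mpr hc)
        · intro h; linarith
      · rw [hdetC, hc.neg_one_pow]
        constructor
        · intro _; nlinarith
        · intro _; exact hc
    have hq : n*(n-1)/2 = m*(2*m+1) := by
      have h0 : n - 1 = 2*m := by omega
      rw [h0, hm]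
      have h1 : (2*m+1)*(2*m) = (m*(2*m+1))*2 := by ring
      rw [h1, Nat.mul_div_cancel _ two_pos]
    by_cases hneg : t (n-1) < 0
    · have hAn : t (n-1) ^ n < 0 := Odd.pow_neg ⟨m, by omega⟩ hneg
      rw [if_pos ⟨⟨m, by omega⟩, hneg⟩]
      rcases Nat.even_or_odd m with hmn | hmn
      · have he : Even (n*(n-1)/2) := by rw [hq]; exact hmn.mul_right _
        have hdlt : A.det < 0 := by rw [hdet, he.neg_one_pow, one_mul]; exact hAn
        have hodd : Odd N.card := hiff.mpr hdlt
        rw [hnu]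
        rw [Nat.odd_iff] at hodd
        rw [Nat.even_iff] at hmn
        omega
      · have ho : Odd (n*(n-1)/2) := by
          rw [hq]
          exact hmn.mul (by exact ⟨m, by ring⟩)
        have hdgt : 0 < A.det := by
          rw [hdet, ho.neg_one_pow]
          nlinarith
        have hodd : ¬ Odd N.card := fun h => absurd (hiff.mp h) (by linarith)
        rw [hnu]
        rw [Nat.odd_iff] at hodd
        rw [Nat.odd_iff] at hmn
        omega
    · have hpos : 0 < t (n-1) := lt_of_le_of_ne (not_lt.mp hneg) (Ne.symm ha)
      have hAn : 0 < t (n-1) ^ n := pow_pos hpos n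
      rw [if_neg (by rintro ⟨-, h⟩; exact hneg h)]
      rcases Nat.even_or_odd m with hmn | hmn
      · have he : Even (n*(n-1)/2) := by rw [hq]; exact hmn.mul_right _
        have hdgt : 0 < A.det := by rw [hdet, he.neg_one_pow, one_mul]; exact hAn
        have hodd : ¬ Odd N.card := fun h => absurd (hiff.mp h) (by linarith)
        rw [hnu]
        rw [Nat.odd_iff] at hodd
        rw [Nat.even_iff] at hmn
        omega
      · have ho : Odd (n*(n-1)/2) := by
          rw [hq]
          exact hmn.mul (⟨m, by ring⟩)
        have hdlt : A.det < 0 := by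
          rw [hdet, ho.neg_one_pow]
          nlinarith
        have hodd : Odd N.card := hiff.mpr hdlt
        rw [hnu]
        rw [Nat.odd_iff] at hodd hmn
        omega

/-- Facts about the first normal index of a sequence with
`s_0 = ⋯ = s_{ν-2} = 0`, `s_{ν-1} ≠ 0`. -/
theorem first_normal_index_facts
    (ν : ℕ) (hν : 1 ≤ ν) (s : ℕ → ℝ)
    (hzero : ∀ j, j + 2 ≤ ν → s j = 0) (hsν : s (ν - 1) ≠ 0) :
    ((∀ i, 1 ≤ i → i + 1 ≤ ν → Matrix.det (hankelM s i) = 0) ∧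
      Matrix.det (hankelM s ν) ≠ 0 ∧ Matrix.det (hankelMp s (ν - 1)) ≠ 0) ∧
    ((-1 : ℝ) ^ (ν + 1) * Matrix.det (hankelMp s (ν - 1)) / Matrix.det (hankelM s ν) =
      (s (ν - 1))⁻¹) ∧
    (nuNeg (hankelM s ν) =
      if Odd ν ∧ s (ν - 1) < 0 then (ν + 1) / 2 else ν / 2) ∧
    (nuNeg (hankelMp s (ν - 1)) =
      if Even ν ∧ s (ν - 1) < 0 then ν / 2 else (ν - 1) / 2) := by
  classical
  set a := s (ν - 1) with ha
  -- determinant formulas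
  have hM : hankelM s ν = Matrix.of fun i j : Fin ν => s ((i:ℕ) + j) := rfl
  have hMp : hankelMp s (ν-1) =
      Matrix.of fun i j : Fin (ν-1) => (fun m => s (m+1)) ((i:ℕ) + j) := rfl
  have ht' : ∀ m, m + 2 ≤ ν - 1 → s (m+1) = 0 := fun m hm => hzero (m+1) (by omega)
  have hdet1 : Matrix.det (hankelM s ν) = (-1 : ℝ)^(ν*(ν-1)/2) * a ^ ν := by
    rw [hM, det_antitri ν s hzero]
  have hdet2 : Matrix.det (hankelMp s (ν-1)) =
      (-1 : ℝ)^((ν-1)*(ν-1-1)/2) * s (ν-1-1+1) ^ (ν-1) := by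
    rw [hMp, det_antitri (ν-1) (fun m => s (m+1)) ht']
  -- part 1
  have part1a : ∀ i, 1 ≤ i → i + 1 ≤ ν → Matrix.det (hankelM s i) = 0 := by
    intro i hi1 hi2
    apply Matrix.det_eq_zero_of_row_eq_zero (⟨0, by omega⟩ : Fin i)
    intro j
    have : (j : ℕ) + 2 ≤ ν := by have := j.2; omega
    simpa [hankelM] using hzero j this
  have hd1ne : Matrix.det (hankelM s ν) ≠ 0 := by
    rw [hdet1]
    exact mul_ne_zero (pow_ne_zero _ (by norm_num)) (pow_ne_zero _ hsν)
  have hd2ne : Matrix.det (hankelMp s (ν-1)) ≠ 0 := by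
    rcases Nat.lt_or_ge ν 2 with h | h
    · have hν1 : ν = 1 := by omega
      subst hν1
      rw [hdet2]
      norm_num
    · rw [hdet2]
      refine mul_ne_zero (pow_ne_zero _ (by norm_num)) (pow_ne_zero _ ?_)
      have : ν - 1 - 1 + 1 = ν - 1 := by omega
      rw [this]
      exact hsν
  -- part 2
  have part2 : (-1 : ℝ) ^ (ν + 1) * Matrix.det (hankelMp s (ν - 1)) / Matrix.det (hankelM s ν) =
      a⁻¹ := by
    rcases Nat.lt_or_ge ν 2 with h | h
    · have hν1 : ν = 1 := by omega
      subst hν1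
      have h0 : Matrix.det (hankelMp s 0) = 1 := by
        rw [hdet2]; simp
      have h1 : Matrix.det (hankelM s 1) = a := by
        rw [hdet1]; simp
      rw [h0, h1]
      norm_num
    · have harg : ν - 1 - 1 + 1 = ν - 1 := by omega
      rw [hdet1, hdet2, harg]
      have hqs : ν*(ν-1)/2 = (ν-1)*(ν-1-1)/2 + (ν-1) := by
        have := Nat.triangle_succ (ν-1)
        have hs : ν - 1 + 1 = ν := by omega
        rw [hs] at this
        exact this
      have hsg : ((-1 : ℝ)) ^ (ν+1) = (-1)^(ν-1) := by
        rw [show ν + 1 = (ν-1) + 2 by omega, pow_add]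
        norm_num
      have hpa : a ^ ν = a^(ν-1) * a := by
        rw [← pow_succ]
        congr 1
        omega
      rw [hsg, hqs, pow_add, hpa]
      have h1 : ((-1:ℝ))^(ν-1) ≠ 0 := pow_ne_zero _ (by norm_num)
      have h2 : ((-1:ℝ))^((ν-1)*(ν-1-1)/2) ≠ 0 := pow_ne_zero _ (by norm_num)
      have h3 : a^(ν-1) ≠ 0 := pow_ne_zero _ hsν
      field_simp
      ring
  -- part 3
  have part3 : nuNeg (hankelM s ν) =
      if Odd ν ∧ a < 0 then (ν + 1) / 2 else ν / 2 := by
    rw [hM]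
    exact nuNeg_antitri ν s hzero hsν
  -- part 4
  have part4 : nuNeg (hankelMp s (ν-1)) =
      if Even ν ∧ a < 0 then ν / 2 else (ν - 1) / 2 := by
    rcases Nat.lt_or_ge ν 2 with h | h
    · have hν1 : ν = 1 := by omega
      subst hν1
      have : nuNeg (hankelMp s 0) = 0 := by
        unfold nuNeg
        have : (hankelMp s 0).charpoly = 1 := by
          unfold Matrix.charpoly
          exact Matrix.det_isEmpty
        rw [this, Polynomial.roots_one]
        simp
      rw [this, if_neg]
      rintro ⟨he, -⟩
      exact (Nat.not_even_iff_odd.mpr odd_one) he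
    · have harg : ν - 1 - 1 + 1 = ν - 1 := by omega
      rw [hMp, nuNeg_antitri (ν-1) (fun m => s (m+1)) ht'
        (by show s (ν-1-1+1) ≠ 0; rw [harg]; exact hsν)]
      have hbeta : ((fun m => s (m+1)) (ν-1-1) < 0) = (a < 0) := by
        show (s (ν-1-1+1) < 0) = (a < 0)
        rw [harg]
      refine if_congr ?_ (by omega) rfl
      rw [hbeta]
      constructor
      · rintro ⟨ho, hlt⟩
        refine ⟨?_, hlt⟩
        rw [Nat.even_iff]; rw [Nat.odd_iff] at ho; omega
      · rintro ⟨he, hlt⟩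
        refine ⟨?_, hlt⟩
        rw [Nat.odd_iff]; rw [Nat.even_iff] at he; omega
  exact ⟨⟨part1a, hd1ne, hd2ne⟩, part2, part3, part4⟩

end
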